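/- Let μ ∈ ℂ and set λ = e^{μ/m}. Then λ is an eigenvalue of the Euler companion matrix C if and only if det D(μ, ε) = 0, where D(μ, ε) = e^{μ}(g(με)μ·I_n − A) − B and g(x) = (e^x − 1)/x (with g(0) = 1), so that g(με)μ = m(e^{μ/m} − 1). In particular, if det D(μ, ε) = 0 then e^{με} solves the characteristic equation det(λI − C) = 0 of the forward Euler discretization. -/

import Mathlib

open Matrix

/-- The Euler companion matrix `C` of the forward Euler discretization
`z_{k+1} = z_k + ε A z_k + ε B z_{k-m}`, with step size `ε = 1/m`, written in
`(m+1) × (m+1)` blocks of size `n × n`: the first block row is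
`(I + εA, 0, …, 0, εB)`, the subdiagonal blocks are `I`, all other blocks vanish. -/
noncomputable def eulerC (n m : ℕ) (A B : Matrix (Fin n) (Fin n) ℝ) :
    Matrix (Fin (m+1) × Fin n) (Fin (m+1) × Fin n) ℝ :=
  fun ip jq =>
    if ip.1 = 0 then
      (if jq.1 = 0 then (if ip.2 = jq.2 then 1 else 0) + (1 / (m : ℝ)) * A ip.2 jq.2
       else if (jq.1 : ℕ) = m then (1 / (m : ℝ)) * B ip.2 jq.2 else 0)
    else if (jq.1 : ℕ) + 1 = (ip.1 : ℕ) then (if ip.2 = jq.2 then 1 else 0) else 0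

/-- The function `D(μ, ε) = e^μ (g(με) μ I - A) - B`, where `g(x) = (e^x - 1)/x`
(with `g(0) = 1`), so that `g(με) μ = m (e^{μ/m} - 1)` for `ε = 1/m`. -/
noncomputable def Dmat (n m : ℕ) (A B : Matrix (Fin n) (Fin n) ℝ) (μ : ℂ) :
    Matrix (Fin n) (Fin n) ℂ :=
  Complex.exp μ • (((m : ℂ) * (Complex.exp (μ / (m : ℂ)) - 1)) • (1 : Matrix (Fin n) (Fin n) ℂ)
    - A.map Complex.ofReal) - B.map Complex.ofReal

noncomputable def Umat (n m : ℕ) (lam : ℂ) :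
    Matrix (Fin (m+1) × Fin n) (Fin (m+1) × Fin n) ℂ :=
  fun ip jq => if ip.2 = jq.2 ∧ jq.1 ≤ ip.1 then lam⁻¹ ^ ((ip.1 : ℕ) - (jq.1 : ℕ)) else 0

noncomputable def Tmat (n m : ℕ) (A B : Matrix (Fin n) (Fin n) ℝ) (lam : ℂ) :
    Matrix (Fin (m+1) × Fin n) (Fin (m+1) × Fin n) ℂ :=
  fun ip jq =>
    if ip.1 = 0 then
      (if jq.1 = 0 then
         ((lam - 1) * (if ip.2 = jq.2 then 1 else 0) - (1 / (m : ℂ)) * (A ip.2 jq.2 : ℂ))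
       else 0)
        - lam⁻¹ ^ (m - (jq.1 : ℕ)) * ((1 / (m : ℂ)) * (B ip.2 jq.2 : ℂ))
    else if ip.1 = jq.1 then lam * (if ip.2 = jq.2 then 1 else 0) else 0

noncomputable def T0mat (n m : ℕ) (A B : Matrix (Fin n) (Fin n) ℝ) (lam : ℂ) :
    Matrix (Fin n) (Fin n) ℂ :=
  fun p q => ((lam - 1) * (if p = q then 1 else 0) - (1 / (m : ℂ)) * (A p q : ℂ))
    - lam⁻¹ ^ m * ((1 / (m : ℂ)) * (B p q : ℂ))

lemma toSquareBlock_det_fin (n m' : ℕ) (T : Matrix (Fin m' × Fin n) (Fin m' × Fin n) ℂ)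
    (a : Fin m') :
    (T.toSquareBlock Prod.fst a).det = (Matrix.of fun p q : Fin n => T (a, p) (a, q)).det := by
  rw [← Matrix.det_submatrix_equiv_self
    (Equiv.mk (fun r : Fin n => (⟨(a, r), rfl⟩ : {ip : Fin m' × Fin n // ip.1 = a}))
      (fun x => x.1.2) (fun r => rfl) (by rintro ⟨⟨i, p⟩, rfl⟩; rfl))
    (T.toSquareBlock Prod.fst a)]
  rfl

lemma det_Umat (n m : ℕ) (lam : ℂ) : (Umat n m lam).det = 1 := by
  rw [← Matrix.det_transpose]
  have hbt : ((Umat n m lam)ᵀ).BlockTriangular (Prod.fst) := by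
    rintro ⟨i, p⟩ ⟨k, q⟩ h
    simp only [Matrix.transpose_apply, Umat]
    rw [if_neg]
    rintro ⟨-, hle⟩
    exact absurd (lt_of_lt_of_le h hle) (lt_irrefl _)
  rw [hbt.det]
  apply Finset.prod_eq_one
  intro a _
  rw [toSquareBlock_det_fin]
  have : (Matrix.of fun p q : Fin n => (Umat n m lam)ᵀ (a, p) (a, q))
      = (1 : Matrix (Fin n) (Fin n) ℂ) := by
    ext p q
    simp only [Matrix.of_apply, Matrix.transpose_apply, Umat, Matrix.one_apply]
    by_cases h : q = p
    · simp [h]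
    · simp [h, Ne.symm h]
  rw [this, Matrix.det_one]

lemma det_Tmat (n m : ℕ) (hn : 0 < n) (A B : Matrix (Fin n) (Fin n) ℝ) (lam : ℂ) :
    (Tmat n m A B lam).det = (T0mat n m A B lam).det * (lam ^ n) ^ m := by
  have hbt : (Tmat n m A B lam).BlockTriangular (Prod.fst) := by
    rintro ⟨i, p⟩ ⟨k, q⟩ h
    have hi : ¬ i = 0 := by
      rintro rfl
      exact absurd h (by simp [Fin.le_def])
    have hik : ¬ i = k := fun hik => absurd h (by simp [hik])
    simp only [Tmat] at *
    simp [hi, hik]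
  rw [hbt.det]
  have himg : (Finset.univ.image (Prod.fst : Fin (m+1) × Fin n → Fin (m+1))) = Finset.univ := by
    ext a
    simp only [Finset.mem_image, Finset.mem_univ, iff_true]
    exact ⟨(a, ⟨0, hn⟩), trivial, rfl⟩
  rw [himg, Fin.prod_univ_succ]
  congr 1
  · rw [toSquareBlock_det_fin]
    congr 1
  · have hblk : ∀ i : Fin m,
        ((Tmat n m A B lam).toSquareBlock Prod.fst i.succ).det = lam ^ n := by
      intro i
      rw [toSquareBlock_det_fin]
      have : (Matrix.of fun p q : Fin n => Tmat n m A B lam (i.succ, p) (i.succ, q))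
          = lam • (1 : Matrix (Fin n) (Fin n) ℂ) := by
        ext p q
        simp [Tmat, Fin.succ_ne_zero, Matrix.one_apply, mul_ite]
      rw [this, Matrix.det_smul, Matrix.det_one, Fintype.card_fin, mul_one]
    rw [Finset.prod_congr rfl (fun i _ => hblk i)]
    simp

lemma mul_Umat (n m : ℕ) (hm : 0 < m) (A B : Matrix (Fin n) (Fin n) ℝ) (lam : ℂ)
    (hlam : lam ≠ 0) :
    (lam • (1 : Matrix (Fin (m+1) × Fin n) (Fin (m+1) × Fin n) ℂ)
        - (eulerC n m A B).map Complex.ofReal) * Umat n m lam = Tmat n m A B lam := by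
  ext ⟨i, p⟩ ⟨k, q⟩
  rw [Matrix.mul_apply, Fintype.sum_prod_type]
  have hinner : ∀ j : Fin (m+1),
      (∑ r : Fin n,
        (lam • (1 : Matrix (Fin (m+1) × Fin n) (Fin (m+1) × Fin n) ℂ)
          - (eulerC n m A B).map Complex.ofReal) (i, p) (j, r) * Umat n m lam (j, r) (k, q))
      = (lam • (1 : Matrix (Fin (m+1) × Fin n) (Fin (m+1) × Fin n) ℂ)
          - (eulerC n m A B).map Complex.ofReal) (i, p) (j, q) * Umat n m lam (j, q) (k, q) := by
    intro j
    apply Finset.sum_eq_single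
    · intro r _ hr
      have : Umat n m lam (j, r) (k, q) = 0 := by simp [Umat, hr]
      rw [this, mul_zero]
    · intro h; exact absurd (Finset.mem_univ _) h
  rw [Finset.sum_congr rfl fun j _ => hinner j]
  by_cases hi : i = 0
  · subst hi
    have hlast : ((Fin.last m : Fin (m+1)) : ℕ) = m := Fin.val_last m
    have h0m : (0 : Fin (m+1)) ≠ Fin.last m := by
      simp only [ne_eq, Fin.ext_iff, hlast, Fin.val_zero]
      omega
    rw [← Finset.sum_subset (Finset.subset_univ ({0, Fin.last m} : Finset (Fin (m+1)))) ?hz]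
    case hz =>
      intro j _ hj
      simp only [Finset.mem_insert, Finset.mem_singleton, not_or] at hj
      obtain ⟨hj0, hjm⟩ := hj
      have hjm' : ¬ ((j : ℕ) = m) := by
        intro h; exact hjm (Fin.ext (by rw [hlast]; exact h))
      have h1 : ¬ ((0 : Fin (m+1)), p) = (j, q) := by
        simp only [Prod.mk.injEq, not_and]
        intro h; exact absurd h.symm hj0
      simp [eulerC, Matrix.one_apply, h1, hj0, Ne.symm hj0, hjm']
    rw [Finset.sum_pair h0m]
    have hUl : Umat n m lam (Fin.last m, q) (k, q) = lam⁻¹ ^ (m - (k : ℕ)) := by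
      simp [Umat, Fin.le_last, hlast]
    have hne : ¬ ((0 : Fin (m+1)), p) = (Fin.last m, q) := by
      simp only [Prod.mk.injEq, not_and]
      intro h; exact absurd h h0m
    by_cases hk : k = 0
    · subst hk
      have hU0 : Umat n m lam ((0 : Fin (m+1)), q) ((0 : Fin (m+1)), q) = 1 := by
        simp [Umat]
      simp only [Matrix.sub_apply, Matrix.smul_apply, Matrix.one_apply, Matrix.map_apply,
        smul_eq_mul, hU0, hUl, hne]
      simp only [eulerC, Tmat, hne]
      have hm0 : ¬ ((0 : ℕ) = m) := by omega
      by_cases hpq : p = q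
      · simp [hpq, hlast, hm0, h0m.symm]
        push_cast
        ring
      · simp [hpq, hlast, hm0, h0m.symm, Prod.mk.injEq]
        push_cast
        ring
    · have hU0 : Umat n m lam ((0 : Fin (m+1)), q) (k, q) = 0 := by
        have : ¬ (k ≤ (0 : Fin (m+1))) := by
          rw [Fin.le_def]
          simp only [Fin.val_zero, Nat.le_zero]
          intro h; exact hk (Fin.ext h)
        simp [Umat, this]
      simp only [Matrix.sub_apply, Matrix.smul_apply, Matrix.one_apply, Matrix.map_apply,
        smul_eq_mul, hU0, hUl, hne]
      simp only [eulerC, Tmat, hne]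
      have hm0 : ¬ ((0 : ℕ) = m) := by omega
      by_cases hpq : p = q
      · simp [hpq, hlast, hm0, h0m.symm, hk, Ne.symm hk]
        push_cast
        ring
      · simp [hpq, hlast, hm0, h0m.symm, hk, Ne.symm hk, Prod.mk.injEq]
        push_cast
        ring
  · -- i ≠ 0
    have hipos : 0 < (i : ℕ) := Nat.pos_of_ne_zero (fun h => hi (Fin.ext h))
    set i' : Fin (m+1) := ⟨(i : ℕ) - 1, by omega⟩ with hi'
    have hvi' : (i' : ℕ) = (i : ℕ) - 1 := rfl
    have hii' : i' ≠ i := by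
      simp only [ne_eq, Fin.ext_iff, hvi']
      omega
    rw [← Finset.sum_subset (Finset.subset_univ ({i', i} : Finset (Fin (m+1)))) ?hz]
    case hz =>
      intro j _ hj
      simp only [Finset.mem_insert, Finset.mem_singleton, not_or] at hj
      obtain ⟨hji', hji⟩ := hj
      have h2 : ¬ (i, p) = (j, q) := by
        simp only [Prod.mk.injEq, not_and]
        intro h; exact absurd h.symm hji
      have h3 : ¬ ((j : ℕ) + 1 = (i : ℕ)) := by
        intro h
        apply hji'
        rw [Fin.ext_iff, hvi']
        omega
      simp [eulerC, Matrix.one_apply, h2, hi, h3]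
    rw [Finset.sum_pair hii']
    have hEi' : (eulerC n m A B).map Complex.ofReal (i, p) (i', q)
        = if p = q then 1 else 0 := by
      have h3 : (i' : ℕ) + 1 = (i : ℕ) := by rw [hvi']; omega
      simp [eulerC, hi, h3, apply_ite Complex.ofReal]
    have hEi : (eulerC n m A B).map Complex.ofReal (i, p) (i, q) = 0 := by
      have h3 : ¬ ((i : ℕ) + 1 = (i : ℕ)) := by omega
      simp [eulerC, hi, h3]
    have hMi' : ¬ ((i, p) = (i', q)) := by
      simp only [Prod.mk.injEq, not_and]
      intro h; exact absurd h.symm hii'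
    simp only [Matrix.sub_apply, Matrix.smul_apply, Matrix.one_apply,
      smul_eq_mul, hMi', hEi', hEi, if_false, if_neg hMi']
    by_cases hpq : p = q
    · subst hpq
      simp only [if_pos rfl, Prod.mk.injEq, true_and, if_pos (rfl : p = p)]
      rcases lt_trichotomy (k : ℕ) (i : ℕ) with hlt | heq | hgt
      · have hk1 : k ≤ i' := by rw [Fin.le_def, hvi']; omega
        have hk2 : k ≤ i := by rw [Fin.le_def]; omega
        have hik : ¬ (i = k) := by
          intro h; rw [h] at hlt; omega
        have e1 : (i : ℕ) - (k : ℕ) = ((i' : ℕ) - (k : ℕ)) + 1 := by rw [hvi']; omega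
        simp only [Umat, Tmat, if_neg hi, if_neg hik]
        simp only [hk1, hk2, and_true, true_and, and_self, eq_self_iff_true, if_true]
        rw [e1, pow_succ]
        linear_combination (lam⁻¹ ^ ((i' : ℕ) - (k : ℕ))) * mul_inv_cancel₀ hlam
      · have hik : i = k := Fin.ext heq.symm
        have hk1 : ¬ ((k : Fin (m+1)) ≤ i') := by rw [Fin.le_def, hvi']; omega
        have hk2 : k ≤ i := by rw [Fin.le_def]; omega
        have e0 : (i : ℕ) - (k : ℕ) = 0 := by omega
        simp only [Umat, Tmat, if_neg hi, if_pos hik, e0, pow_zero]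
        simp only [hk1, hk2, and_true, true_and, and_false, eq_self_iff_true, if_true, if_false]
        ring
      · have hik : ¬ (i = k) := by
          intro h; rw [h] at hgt; omega
        have hk1 : ¬ ((k : Fin (m+1)) ≤ i') := by rw [Fin.le_def, hvi']; omega
        have hk2 : ¬ (k ≤ i) := by rw [Fin.le_def]; omega
        simp only [Umat, Tmat, if_neg hi, if_neg hik]
        simp only [hk1, hk2, and_false, if_false]
        ring
    · simp only [if_neg hpq, Prod.mk.injEq, true_and]
      simp [Umat, Tmat, hi, hpq]

lemma Dmat_eq (n m : ℕ) (hm : 0 < m) (A B : Matrix (Fin n) (Fin n) ℝ) (μ : ℂ) :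
    Dmat n m A B μ
      = ((m : ℂ) * (Complex.exp (μ / (m : ℂ))) ^ m) • T0mat n m A B (Complex.exp (μ / (m : ℂ))) := by
  set lam := Complex.exp (μ / (m : ℂ)) with hldef
  have hm0 : (m : ℂ) ≠ 0 := Nat.cast_ne_zero.mpr hm.ne'
  have hlam : lam ≠ 0 := Complex.exp_ne_zero _
  have hexp : lam ^ m = Complex.exp μ := by
    rw [hldef, ← Complex.exp_nat_mul]
    congr 1
    field_simp
  have hcan : lam ^ m * lam⁻¹ ^ m = 1 := by
    rw [← mul_pow, mul_inv_cancel₀ hlam, one_pow]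
  ext p q
  simp only [Dmat, T0mat, Matrix.sub_apply, Matrix.smul_apply, Matrix.map_apply,
    Matrix.one_apply, smul_eq_mul, ← hexp]
  by_cases hpq : p = q
  · simp only [hpq, if_pos rfl]
    field_simp
    simp only [↓reduceIte, ← div_eq_mul_inv, ← hldef]
    linear_combination (↑(B q q) : ℂ) * hcan
  · simp only [if_neg hpq]
    field_simp
    linear_combination (↑(B p q) : ℂ) * hcan

theorem stmt_7 (n m : ℕ) (hn : 0 < n) (hm : 0 < m) (A B : Matrix (Fin n) (Fin n) ℝ)
    (μ : ℂ) :
    (Matrix.det (Complex.exp (μ / (m : ℂ)) •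
          (1 : Matrix (Fin (m+1) × Fin n) (Fin (m+1) × Fin n) ℂ)
        - (eulerC n m A B).map Complex.ofReal) = 0 ↔
      Matrix.det (Dmat n m A B μ) = 0) ∧
    (Matrix.det (Dmat n m A B μ) = 0 →
      Matrix.det (Complex.exp (μ * (1 / (m : ℂ))) •
          (1 : Matrix (Fin (m+1) × Fin n) (Fin (m+1) × Fin n) ℂ)
        - (eulerC n m A B).map Complex.ofReal) = 0) := by
  set lam := Complex.exp (μ / (m : ℂ)) with hldef
  have hm0 : (m : ℂ) ≠ 0 := Nat.cast_ne_zero.mpr hm.ne'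
  have hlam : lam ≠ 0 := Complex.exp_ne_zero _
  have hdetM : Matrix.det (lam • (1 : Matrix (Fin (m+1) × Fin n) (Fin (m+1) × Fin n) ℂ)
      - (eulerC n m A B).map Complex.ofReal)
      = (T0mat n m A B lam).det * (lam ^ n) ^ m := by
    have h1 : Matrix.det (lam • (1 : Matrix (Fin (m+1) × Fin n) (Fin (m+1) × Fin n) ℂ)
        - (eulerC n m A B).map Complex.ofReal) * (Umat n m lam).det
        = (Tmat n m A B lam).det := by
      rw [← Matrix.det_mul, mul_Umat n m hm A B lam hlam]
    rw [det_Umat, mul_one] at h1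
    rw [h1, det_Tmat n m hn A B lam]
  have hdetD : Matrix.det (Dmat n m A B μ)
      = ((m : ℂ) * lam ^ m) ^ n * (T0mat n m A B lam).det := by
    rw [Dmat_eq n m hm A B μ, Matrix.det_smul, Fintype.card_fin]
  have hfac1 : (lam ^ n) ^ m ≠ 0 := pow_ne_zero _ (pow_ne_zero _ hlam)
  have hfac2 : ((m : ℂ) * lam ^ m) ^ n ≠ 0 :=
    pow_ne_zero _ (mul_ne_zero hm0 (pow_ne_zero _ hlam))
  have hiff : (Matrix.det (lam • (1 : Matrix (Fin (m+1) × Fin n) (Fin (m+1) × Fin n) ℂ)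
      - (eulerC n m A B).map Complex.ofReal) = 0 ↔ Matrix.det (Dmat n m A B μ) = 0) := by
    rw [hdetM, hdetD, mul_eq_zero, mul_eq_zero]
    constructor
    · rintro (h | h)
      · exact Or.inr h
      · exact absurd h hfac1
    · rintro (h | h)
      · exact absurd h hfac2
      · exact Or.inl h
  refine ⟨hiff, fun h => ?_⟩
  have : μ * (1 / (m : ℂ)) = μ / (m : ℂ) := by ring
  rw [this]
  exact hiff.mpr h
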